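/- For integers $n \ge 3$ and $m \ge 1$, the sequence $c_k = \frac{k!\,(k+m+n-1)!}{(k+m)!\,(k+n-1)!\,{}_1F_1(1-n,\,1-k-n,\,m)}$ (for $k \in \mathbb{N}$) is not constant in $k$. -/

import Mathlib

open Real

/-- The terminating confluent hypergeometric function `₁F₁(-p, b, z)`. -/
noncomputable def oneFOne (p : ℕ) (b z : ℝ) : ℝ :=
  ∑ s ∈ Finset.range (p+1),
    ((∏ i ∈ Finset.range s, (-(p:ℝ) + i)) / (∏ i ∈ Finset.range s, (b + i)))
      * z^s / (s.factorial : ℝ)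

noncomputable def Aa (m n : ℕ) : ℝ := ∑ s ∈ Finset.range n, (m:ℝ)^s / s.factorial

noncomputable def Bb (m n : ℕ) : ℝ :=
  ∑ s ∈ Finset.range n, ((n:ℝ) - s) * (m:ℝ)^s / s.factorial

lemma cast_pred (n : ℕ) (hn : 1 ≤ n) : ((n-1 : ℕ) : ℝ) = (n:ℝ) - 1 := by
  rw [Nat.cast_sub hn, Nat.cast_one]

lemma F0 (n m : ℕ) (hn : 1 ≤ n) : oneFOne (n-1) (1 - (n:ℝ)) m = Aa m n := by
  unfold oneFOne Aa
  rw [Nat.sub_add_cancel hn]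
  apply Finset.sum_congr rfl
  intro s hs
  have hs' : s < n := Finset.mem_range.1 hs
  have hc : (-(((n-1:ℕ)):ℝ)) = 1 - (n:ℝ) := by rw [cast_pred n hn]; ring
  rw [hc]
  have hP : (∏ i ∈ Finset.range s, (1 - (n:ℝ) + i)) ≠ 0 := by
    apply Finset.prod_ne_zero_iff.2
    intro i hi
    have hi' : i < s := Finset.mem_range.1 hi
    have : (i:ℝ) < (n:ℝ) - 1 := by
      have : i + 1 < n := by omega
      have := (Nat.cast_lt (α := ℝ)).2 this
      push_cast at this
      linarith
    intro h
    linarith [h]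
  rw [div_self hP, one_mul]

lemma F1 (n m : ℕ) (hn : 1 ≤ n) : oneFOne (n-1) (-(n:ℝ)) m = Bb m n / n := by
  unfold oneFOne Bb
  rw [Nat.sub_add_cancel hn, Finset.sum_div]
  apply Finset.sum_congr rfl
  intro s hs
  have hs' : s < n := Finset.mem_range.1 hs
  have hc : (-(((n-1:ℕ)):ℝ)) = -(n:ℝ) + 1 := by rw [cast_pred n hn]; ring
  -- numerator: ∏ i in range s, (-(n-1) + i) = ∏ i in range s, f (i+1), f i = -n + i
  set f : ℕ → ℝ := fun i => -(n:ℝ) + i with hf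
  have hnum : (∏ i ∈ Finset.range s, (-(((n-1:ℕ)):ℝ) + i)) = ∏ i ∈ Finset.range s, f (i+1) := by
    apply Finset.prod_congr rfl
    intro i _
    simp only [hf]
    rw [hc]
    push_cast
    ring
  have hden_ne : (∏ i ∈ Finset.range s, f i) ≠ 0 := by
    apply Finset.prod_ne_zero_iff.2
    intro i hi
    have hi' : i < s := Finset.mem_range.1 hi
    have : (i:ℝ) < (n:ℝ) := by exact_mod_cast (by omega : i < n)
    simp only [hf]
    intro h; linarith
  have hshift : (∏ i ∈ Finset.range s, f (i+1)) * f 0 = f s * ∏ i ∈ Finset.range s, f i := by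
    rw [← Finset.prod_range_succ' f s, Finset.prod_range_succ]
    ring
  have hf0 : f 0 = -(n:ℝ) := by simp [hf]
  have hn0 : (n:ℝ) ≠ 0 := by positivity
  have hratio : (∏ i ∈ Finset.range s, f (i+1)) / (∏ i ∈ Finset.range s, f i)
      = ((n:ℝ) - s) / n := by
    rw [div_eq_div_iff hden_ne hn0]
    have : (∏ i ∈ Finset.range s, f (i+1)) * (-(n:ℝ)) = ((s:ℝ) - n) * ∏ i ∈ Finset.range s, f i := by
      rw [← hf0, hshift]; simp only [hf]; ring
    nlinarith [this]
  have hden_eq : (∏ i ∈ Finset.range s, (-(n:ℝ) + i)) = ∏ i ∈ Finset.range s, f i := rfl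
  rw [hnum, hden_eq, hratio]
  ring

lemma Aa_pos (m n : ℕ) (hn : 1 ≤ n) : 0 < Aa m n := by
  unfold Aa
  apply Finset.sum_pos' (fun s _ => by positivity)
  exact ⟨0, Finset.mem_range.2 (by omega), by norm_num⟩

lemma Bb_pos (m n : ℕ) (hm : 1 ≤ m) (hn : 1 ≤ n) : 0 < Bb m n := by
  unfold Bb
  apply Finset.sum_pos
  · intro s hs
    have hs' : s < n := Finset.mem_range.1 hs
    have h1 : (s:ℝ) < n := by exact_mod_cast hs'
    have h2 : (0:ℝ) < m := by exact_mod_cast hm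
    have h3 : (0:ℝ) < (n:ℝ) - s := by linarith
    positivity
  · exact ⟨0, Finset.mem_range.2 (by omega)⟩

lemma Aa_succ (m n : ℕ) : Aa m (n+1) = Aa m n + (m:ℝ)^n / n.factorial := by
  unfold Aa; rw [Finset.sum_range_succ]

lemma Bb_succ (m n : ℕ) : Bb m (n+1) = Bb m n + Aa m (n+1) := by
  unfold Bb Aa
  have h : ∑ s ∈ Finset.range (n+1), (((n+1:ℕ):ℝ) - s) * (m:ℝ)^s / s.factorial
      = ∑ s ∈ Finset.range (n+1),
          (((n:ℝ) - s) * (m:ℝ)^s / s.factorial + (m:ℝ)^s / s.factorial) := by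
    apply Finset.sum_congr rfl
    intro s _
    push_cast
    ring
  rw [h, Finset.sum_add_distrib,
    Finset.sum_range_succ (fun s => ((n:ℝ) - s) * (m:ℝ)^s / s.factorial)]
  simp

lemma single_bound (m n : ℕ) :
    ((n:ℝ)+1) * ((m:ℝ)^(n+1) / (n+1).factorial) ≤ (m:ℝ) * Aa m (n+1) := by
  unfold Aa
  rw [Finset.mul_sum]
  have h := Finset.single_le_sum (f := fun s => (m:ℝ) * ((m:ℝ)^s / s.factorial))
    (fun s _ => by positivity) (Finset.mem_range.2 (Nat.lt_succ_self n))
  have hf : ((n+1).factorial : ℝ) = (n+1) * n.factorial := by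
    rw [Nat.factorial_succ]; push_cast; ring
  have hnf : (0:ℝ) < n.factorial := by positivity
  calc ((n:ℝ)+1) * ((m:ℝ)^(n+1) / (n+1).factorial)
      = (m:ℝ) * ((m:ℝ)^n / n.factorial) := by rw [hf]; field_simp; ring
    _ ≤ _ := h

lemma key_ineq (m n : ℕ) (hm : 1 ≤ m) (hn : 3 ≤ n) :
    ((m:ℝ) + n) * Aa m n < ((m:ℝ) + 1) * Bb m n := by
  induction n, hn using Nat.le_induction with
  | base =>
    unfold Aa Bb
    simp [Finset.sum_range_succ]
    have hm1 : (1:ℝ) ≤ m := by exact_mod_cast hm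
    nlinarith [sq_nonneg ((m:ℝ) - 1), sq_nonneg (m:ℝ)]
  | succ n hn ih =>
    obtain ⟨p, rfl⟩ : ∃ p, n = p + 1 := ⟨n - 1, by omega⟩
    have hA := Aa_succ m (p+1)
    have hB := Bb_succ m (p+1)
    have h2 := single_bound m p
    push_cast
    rw [hB, hA]
    push_cast at ih ⊢
    nlinarith [ih, h2]

theorem epsilon_coefficient_not_constant (n m : ℕ) (hn : 3 ≤ n) (hm : 1 ≤ m) :
    ∃ k k' : ℕ,
      (k.factorial : ℝ) * (k+m+n-1).factorial
          / ((k+m).factorial * (k+n-1).factorial * oneFOne (n-1) (1 - (k:ℝ) - n) m)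
        ≠ (k'.factorial : ℝ) * (k'+m+n-1).factorial
          / ((k'+m).factorial * (k'+n-1).factorial * oneFOne (n-1) (1 - (k':ℝ) - n) m) := by
  refine ⟨0, 1, ?_⟩
  have hn1 : 1 ≤ n := by omega
  have hF0 : oneFOne (n-1) (1 - ((0:ℕ):ℝ) - n) m = Aa m n := by
    rw [show (1 - ((0:ℕ):ℝ) - (n:ℝ)) = 1 - (n:ℝ) by push_cast; ring]
    exact F0 n m hn1
  have hF1 : oneFOne (n-1) (1 - ((1:ℕ):ℝ) - n) m = Bb m n / n := by
    rw [show (1 - ((1:ℕ):ℝ) - (n:ℝ)) = -(n:ℝ) by push_cast; ring]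
    exact F1 n m hn1
  have e1 : 0+m+n-1 = m+n-1 := by omega
  have e2 : 0+m = m := by omega
  have e3 : 0+n-1 = n-1 := by omega
  have e4 : 1+m+n-1 = (m+n-1)+1 := by omega
  have e5 : 1+m = m+1 := by omega
  have e6 : 1+n-1 = n := by omega
  rw [e1, e2, e3, e4, e5, e6, hF0, hF1, Nat.factorial_zero, Nat.factorial_one]
  set a := ((m+n-1).factorial : ℝ) with ha
  set b := (m.factorial : ℝ) with hb
  set c := ((n-1).factorial : ℝ) with hc
  have ha0 : 0 < a := by rw [ha]; positivity
  have hb0 : 0 < b := by rw [hb]; positivity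
  have hc0 : 0 < c := by rw [hc]; positivity
  have hA0 : 0 < Aa m n := Aa_pos m n hn1
  have hB0 : 0 < Bb m n := Bb_pos m n hm hn1
  have hn0 : (0:ℝ) < n := by exact_mod_cast (by omega : 0 < n)
  have hm0 : (0:ℝ) ≤ m := by positivity
  have f1 : (((m+n-1)+1).factorial : ℝ) = ((m:ℝ) + n) * a := by
    rw [Nat.factorial_succ, ha]
    have : ((m+n-1)+1 : ℕ) = m+n := by omega
    push_cast [this]
    ring
  have f2 : ((m+1).factorial : ℝ) = ((m:ℝ)+1) * b := by
    rw [Nat.factorial_succ, hb]; push_cast; ring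
  have f3 : ((n).factorial : ℝ) = (n:ℝ) * c := by
    obtain ⟨q, hq⟩ : ∃ q, n = q + 1 := ⟨n-1, by omega⟩
    subst hq
    rw [Nat.factorial_succ, hc]
    push_cast
    simp
  rw [f1, f2, f3]
  have key := key_ineq m n hm (by omega)
  intro hEq
  rw [div_eq_div_iff (by positivity) (by positivity)] at hEq
  have hEq' : a * ((↑m + 1) * b * c * Bb m n) = ((↑m:ℝ) + ↑n) * a * (b * c * Aa m n) := by
    have hne : (n:ℝ) ≠ 0 := ne_of_gt hn0
    field_simp at hEq
    apply mul_right_cancel₀ hne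
    linear_combination (a * b * c * (n:ℝ)) * hEq
  nlinarith [hEq, key, mul_pos (mul_pos (mul_pos ha0 hb0) hc0) hn0,
    mul_lt_mul_of_pos_left key (mul_pos (mul_pos (mul_pos ha0 hb0) hc0) hn0)]
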